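/- Let Λ ⊂ ℝⁿ be a bounded measurable set, let V : Λ → ℝ be measurable with ∫_Λ |V| dμ < ∞, and let {J_d}_{d∈ℕ} be measurable functions on Λ with ∫_Λ |J_d| dμ < ∞ satisfying: (1) J_d(x) ≤ V(x) for all x ∈ Λ and all d ∈ ℕ; (2) lim_{d→∞} ∫_Λ |V(x) − J_d(x)| dx = 0. Then for every γ ∈ ℝ, lim_{d→∞} D_V({x ∈ Λ : V(x) ≤ γ}, {x ∈ Λ : J_d(x) ≤ γ}) = 0. -/
import Mathlib


open Set Filter MeasureTheory

noncomputable section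

/-- Prop. 19 of the paper: if integrable functions `J_d ≤ V` on a bounded
measurable set `Λ` converge to `V` in `L¹(Λ)`, then for every `γ ∈ ℝ` the `γ`-sublevel sets of
`J_d` converge to the `γ`-sublevel set of `V` in the volume metric. -/
theorem sublevel_convergence_of_L1 {n : ℕ}
    (Λ : Set (EuclideanSpace ℝ (Fin n)))
    (V : EuclideanSpace ℝ (Fin n) → ℝ)
    (J : ℕ → EuclideanSpace ℝ (Fin n) → ℝ)
    (hΛb : Bornology.IsBounded Λ) (hΛm : MeasurableSet Λ)
    (hV : MeasureTheory.IntegrableOn V Λ)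
    (hJ : ∀ d, MeasureTheory.IntegrableOn (J d) Λ)
    (hle : ∀ d, ∀ x ∈ Λ, J d x ≤ V x)
    (hL1 : Filter.Tendsto (fun d => ∫ x in Λ, |V x - J d x|) Filter.atTop (nhds 0)) :
    ∀ γ : ℝ,
      Filter.Tendsto
        (fun d => MeasureTheory.volume
          (({x ∈ Λ | V x ≤ γ} \ {x ∈ Λ | J d x ≤ γ}) ∪
            ({x ∈ Λ | J d x ≤ γ} \ {x ∈ Λ | V x ≤ γ})))
        Filter.atTop (nhds 0) := by
  intro γ
  set ν := MeasureTheory.volume.restrict Λ with hνdef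
  have hνfin : ν Set.univ ≠ ⊤ := by
    rw [Measure.restrict_apply_univ]
    exact hΛb.measure_lt_top.ne
  -- measurable representative of V
  have hVm : AEMeasurable V ν := hV.aemeasurable
  set g := hVm.mk V with hg
  have hgm : Measurable g := hVm.measurable_mk
  have hVg : V =ᵐ[ν] g := hVm.ae_eq_mk
  -- the shrinking band sets
  set T : ℕ → Set (EuclideanSpace ℝ (Fin n)) :=
    fun k => {x | γ < g x ∧ g x ≤ γ + 1 / (k + 1)} with hTdef
  have hTm : ∀ k, MeasurableSet (T k) := fun k =>
    (measurableSet_lt measurable_const hgm).inter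
      (measurableSet_le hgm measurable_const)
  have hTanti : Antitone T := by
    intro a b hab x hx
    refine ⟨hx.1, hx.2.trans ?_⟩
    have : (1 : ℝ) / (b + 1) ≤ 1 / (a + 1) := by
      apply one_div_le_one_div_of_le <;> [positivity; exact_mod_cast by omega]
    linarith
  have hTempty : ⋂ k, T k = ∅ := by
    ext x
    simp only [Set.mem_iInter, Set.mem_empty_iff_false, iff_false, not_forall]
    by_contra h
    push_neg at h
    have h0 := h 0
    obtain ⟨m, hm⟩ := exists_nat_one_div_lt (sub_pos.2 h0.1)
    exact absurd (h m).2 (by linarith)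
  have hTtend : Tendsto (fun k => ν (T k)) atTop (nhds 0) := by
    have := tendsto_measure_iInter_atTop (μ := ν)
      (fun k => (hTm k).nullMeasurableSet) hTanti
      ⟨0, ((measure_mono (Set.subset_univ _)).trans_lt hνfin.lt_top).ne⟩
    rwa [hTempty, measure_empty] at this
  -- lintegrals
  have hfm : ∀ d, AEMeasurable (fun x => ENNReal.ofReal |V x - J d x|) ν := by
    intro d
    have h1 : AEMeasurable (fun x => |V x - J d x|) ν := by
      have := (hVm.sub (hJ d).aemeasurable).norm
      simpa [Real.norm_eq_abs] using this
    exact h1.ennreal_ofReal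
  have hlin : ∀ d, ∫⁻ x, ENNReal.ofReal |V x - J d x| ∂ν
      = ENNReal.ofReal (∫ x, |V x - J d x| ∂ν) := fun d =>
    (ofReal_integral_eq_lintegral_ofReal ((hV.sub (hJ d)).abs)
      (Filter.Eventually.of_forall fun x => abs_nonneg _)).symm
  have hLtend : Tendsto (fun d => ∫⁻ x, ENNReal.ofReal |V x - J d x| ∂ν)
      atTop (nhds 0) := by
    simp only [hlin]
    have := ENNReal.tendsto_ofReal hL1
    simpa using this
  rw [ENNReal.tendsto_nhds_zero]
  intro ε' hε'
  set r := min 1 ε' with hr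
  have hr0 : 0 < r := lt_min one_pos hε'
  have hrε' : r ≤ ε' := min_le_right _ _
  have hrtop : r ≠ ⊤ := ((min_le_left _ _).trans_lt ENNReal.one_lt_top).ne
  have hr2 : 0 < r / 2 := ENNReal.div_pos hr0.ne' (by norm_num)
  -- choose k with ν (T k) < r/2
  obtain ⟨k, hk⟩ := (hTtend.eventually_lt_const hr2).exists
  set ε : ℝ := 1 / (k + 1) with hε
  have hεpos : 0 < ε := by positivity
  have hεne : ENNReal.ofReal ε ≠ 0 := (ENNReal.ofReal_pos.2 hεpos).ne'
  have hεtop : ENNReal.ofReal ε ≠ ⊤ := ENNReal.ofReal_ne_top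
  -- eventually the L¹ error is small
  have hev : ∀ᶠ d in atTop,
      ∫⁻ x, ENNReal.ofReal |V x - J d x| ∂ν < ENNReal.ofReal ε * (r / 2) :=
    hLtend.eventually_lt_const
      (ENNReal.mul_pos hεne hr2.ne')
  filter_upwards [hev] with d hd
  -- the two covering sets
  set E : Set (EuclideanSpace ℝ (Fin n)) :=
    {x | ENNReal.ofReal ε ≤ ENNReal.ofReal |V x - J d x|} with hE
  set TV : Set (EuclideanSpace ℝ (Fin n)) :=
    {x | γ < V x ∧ V x ≤ γ + ε} with hTV
  set S := ({x ∈ Λ | V x ≤ γ} \ {x ∈ Λ | J d x ≤ γ}) ∪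
      ({x ∈ Λ | J d x ≤ γ} \ {x ∈ Λ | V x ≤ γ}) with hS
  have hSΛ : S ⊆ Λ := by
    rintro x (⟨hx, -⟩ | ⟨hx, -⟩) <;> exact hx.1
  have hScover : S ⊆ TV ∪ E := by
    rintro x (⟨⟨hxΛ, hxV⟩, hxB⟩ | ⟨⟨hxΛ, hxJ⟩, hxA⟩)
    · exact absurd ⟨hxΛ, (hle d x hxΛ).trans hxV⟩ hxB
    · have hVx : γ < V x := by
        by_contra h
        exact hxA ⟨hxΛ, not_lt.1 h⟩
      by_cases hcase : V x ≤ γ + ε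
      · exact Or.inl ⟨hVx, hcase⟩
      · refine Or.inr ?_
        have : ε ≤ |V x - J d x| := by
          rw [abs_of_nonneg (by linarith [hle d x hxΛ])]
          linarith [not_le.1 hcase]
        exact ENNReal.ofReal_le_ofReal this
  have hvol : MeasureTheory.volume S = ν S := by
    rw [hνdef, Measure.restrict_apply' hΛm, Set.inter_eq_left.2 hSΛ]
  have hTVeq : ν TV = ν (T k) := by
    apply measure_congr
    filter_upwards [hVg] with x hx
    show (γ < V x ∧ V x ≤ γ + ε) = (γ < g x ∧ g x ≤ γ + 1 / (k + 1))
    rw [hx]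
  have hEbound : ν E ≤ r / 2 := by
    calc ν E ≤ (∫⁻ x, ENNReal.ofReal |V x - J d x| ∂ν) / ENNReal.ofReal ε :=
          meas_ge_le_lintegral_div (hfm d) hεne hεtop
      _ ≤ (ENNReal.ofReal ε * (r / 2)) / ENNReal.ofReal ε :=
          ENNReal.div_le_div_right hd.le _
      _ = r / 2 := by
          rw [mul_comm, mul_div_assoc, ENNReal.div_self hεne hεtop, mul_one]
  calc MeasureTheory.volume S = ν S := hvol
    _ ≤ ν (TV ∪ E) := measure_mono hScover
    _ ≤ ν TV + ν E := measure_union_le _ _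
    _ ≤ r / 2 + r / 2 := by
        rw [hTVeq]; exact add_le_add hk.le hEbound
    _ = r := ENNReal.add_halves r
    _ ≤ ε' := hrε'
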